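/- Let μ be a Borel probability measure and g a positive measurable function such that g^s is μ-integrable for every s > 0. Then the map p ↦ (μ(g²) − μ(g^{2/p})^p)/(p−1) is nonincreasing on (0,∞)∖{1}: for all 0 < p₁ < p₂ with p₁ ≠ 1 and p₂ ≠ 1, (μ(g²) − μ(g^{2/p₂})^{p₂})/(p₂−1) ≤ (μ(g²) − μ(g^{2/p₁})^{p₁})/(p₁−1). -/

import Mathlib

open MeasureTheory

/-- Let `μ` be a Borel probability measure and `g` a positive measurable
function such that `g^s` is `μ`-integrable for every `s > 0`.  Then the map
`p ↦ (μ(g²) − μ(g^{2/p})^p)/(p−1)` is nonincreasing on `(0,∞) \ {1}` : for all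
`0 < p₁ < p₂` with `p₁ ≠ 1` and `p₂ ≠ 1`,
`(μ(g²) − μ(g^{2/p₂})^{p₂})/(p₂−1) ≤ (μ(g²) − μ(g^{2/p₁})^{p₁})/(p₁−1)`. -/
theorem beckner_functional_antitone
    {Ω : Type*} [MeasurableSpace Ω] (μ : Measure Ω) [IsProbabilityMeasure μ]
    (g : Ω → ℝ) (hg : Measurable g) (hgpos : ∀ x, 0 < g x)
    (hint : ∀ s : ℝ, 0 < s → Integrable (fun x => g x ^ s) μ) :
    ∀ p₁ p₂ : ℝ, 0 < p₁ → p₁ < p₂ → p₁ ≠ 1 → p₂ ≠ 1 →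
      ((∫ x, g x ^ (2 : ℝ) ∂μ) - (∫ x, g x ^ (2 / p₂) ∂μ) ^ p₂) / (p₂ - 1) ≤
        ((∫ x, g x ^ (2 : ℝ) ∂μ) - (∫ x, g x ^ (2 / p₁) ∂μ) ^ p₁) / (p₁ - 1) := by
  intro p₁ p₂ hp₁ hlt hp₁1 hp₂1
  set I : ℝ → ℝ := fun s => ∫ x, g x ^ s ∂μ with hIdef
  have hp₂ : 0 < p₂ := hp₁.trans hlt
  -- positivity of the integrals
  have hIpos : ∀ s : ℝ, 0 < s → 0 < I s := by
    intro s hs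
    have hnn : (0 : Ω → ℝ) ≤ fun x => g x ^ s := fun x =>
      (Real.rpow_pos_of_pos (hgpos x) s).le
    rw [hIdef]
    rw [integral_pos_iff_support_of_nonneg hnn (hint s hs)]
    have : Function.support (fun x => g x ^ s) = Set.univ := by
      ext x
      simp [Function.mem_support, (Real.rpow_pos_of_pos (hgpos x) s).ne']
    rw [this]
    simp
  -- membership in Lp
  have memf : ∀ c u : ℝ, 0 < c → 0 < u →
      MemLp (fun x => g x ^ (c * u)) (ENNReal.ofReal (1 / c)) μ := by
    intro c u hc hu
    have A : ENNReal.ofReal (1 / c) ≠ 0 := by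
      rwa [Ne, ENNReal.ofReal_eq_zero, not_le, one_div_pos]
    have B : ENNReal.ofReal (1 / c) ≠ ⊤ := ENNReal.ofReal_ne_top
    rw [← memLp_norm_rpow_iff _ A B, ENNReal.toReal_ofReal (one_div_nonneg.mpr hc.le),
      ENNReal.div_self A B, memLp_one_iff_integrable]
    · apply (hint u hu).congr
      filter_upwards with x
      rw [Real.norm_of_nonneg (Real.rpow_pos_of_pos (hgpos x) _).le,
        ← Real.rpow_mul (hgpos x).le]
      congr 1
      field_simp
    · exact (hint (c * u) (by positivity)).aestronglyMeasurable
  -- Hölder's inequality : log-convexity of `I`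
  have holder : ∀ s t a b : ℝ, 0 < s → 0 < t → 0 < a → 0 < b → a + b = 1 →
      I (a * s + b * t) ≤ I s ^ a * I t ^ b := by
    intro s t a b hs ht ha hb hab
    have e : Real.HolderConjugate (1 / a) (1 / b) := Real.holderConjugate_one_div ha hb hab
    have nn : ∀ w : ℝ, (0 : Ω → ℝ) ≤ᵐ[μ] fun x => g x ^ w := fun w =>
      Filter.Eventually.of_forall fun x => (Real.rpow_pos_of_pos (hgpos x) w).le
    have key := integral_mul_le_Lp_mul_Lq_of_nonneg e (nn (a * s)) (nn (b * t))
      (memf a s ha hs) (memf b t hb ht)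
    have h1 : ∫ x, g x ^ (a * s) * g x ^ (b * t) ∂μ = I (a * s + b * t) := by
      rw [hIdef]
      refine integral_congr_ae (Filter.Eventually.of_forall fun x => ?_)
      dsimp only
      rw [← Real.rpow_add (hgpos x)]
    have h2 : ∫ x, (g x ^ (a * s)) ^ (1 / a) ∂μ = I s := by
      rw [hIdef]
      refine integral_congr_ae (Filter.Eventually.of_forall fun x => ?_)
      dsimp only
      rw [← Real.rpow_mul (hgpos x).le]
      congr 1
      field_simp
    have h3 : ∫ x, (g x ^ (b * t)) ^ (1 / b) ∂μ = I t := by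
      rw [hIdef]
      refine integral_congr_ae (Filter.Eventually.of_forall fun x => ?_)
      dsimp only
      rw [← Real.rpow_mul (hgpos x).le]
      congr 1
      field_simp
    rw [h1, h2, h3, one_div_one_div, one_div_one_div] at key
    exact key
  -- log-convexity of `I` on `(0, ∞)`
  have hL : ConvexOn ℝ (Set.Ioi (0 : ℝ)) (fun s => Real.log (I s)) := by
    refine convexOn_iff_forall_pos.mpr ⟨convex_Ioi _, fun x hx y hy a b ha hb hab => ?_⟩
    simp only [Set.mem_Ioi] at hx hy
    simp only [smul_eq_mul]
    rw [← Real.log_rpow (hIpos x hx), ← Real.log_rpow (hIpos y hy), ← Real.log_mul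
      (Real.rpow_pos_of_pos (hIpos x hx) a).ne' (Real.rpow_pos_of_pos (hIpos y hy) b).ne']
    have hxy : 0 < a * x + b * y := by positivity
    exact Real.log_le_log (hIpos _ hxy) (holder x y a b hx hy ha hb hab)
  -- the function `φ p = I(2/p)^p` and its exponential form
  set φ : ℝ → ℝ := fun p => I (2 / p) ^ p with hφdef
  have hφeq : ∀ p : ℝ, 0 < p → φ p = Real.exp (p * Real.log (I (2 / p))) := by
    intro p hp
    show I (2 / p) ^ p = _
    rw [Real.rpow_def_of_pos (hIpos _ (by positivity)), mul_comm]
  -- convexity of φ on (0,∞)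
  have hφconv : ConvexOn ℝ (Set.Ioi (0 : ℝ)) φ := by
    refine convexOn_iff_forall_pos.mpr ⟨convex_Ioi _, fun x hx y hy a b ha hb hab => ?_⟩
    simp only [Set.mem_Ioi] at hx hy
    simp only [smul_eq_mul]
    obtain rfl : b = 1 - a := by linarith
    have hz : 0 < a * x + (1 - a) * y := by positivity
    -- perspective inequality for the convex function `log ∘ I`
    have hw1 : 0 < a * x / (a * x + (1 - a) * y) := by positivity
    have hw2 : 0 < (1 - a) * y / (a * x + (1 - a) * y) := by positivity
    have hwsum : a * x / (a * x + (1 - a) * y) + (1 - a) * y / (a * x + (1 - a) * y) = 1 := by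
      field_simp
    have harg : (a * x / (a * x + (1 - a) * y)) * (2 / x) + ((1 - a) * y / (a * x + (1 - a) * y)) * (2 / y)
        = 2 / (a * x + (1 - a) * y) := by
      field_simp
      ring
    have hper := hL.2 (Set.mem_Ioi.mpr (show (0:ℝ) < 2 / x by positivity))
      (Set.mem_Ioi.mpr (show (0:ℝ) < 2 / y by positivity)) hw1.le hw2.le hwsum
    simp only [smul_eq_mul] at hper
    rw [harg] at hper
    -- multiply through by `a*x + b*y`
    have hmul : (a * x + (1 - a) * y) * Real.log (I (2 / (a * x + (1 - a) * y)))
        ≤ a * x * Real.log (I (2 / x)) + (1 - a) * y * Real.log (I (2 / y)) := by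
      have := mul_le_mul_of_nonneg_left hper hz.le
      calc (a * x + (1 - a) * y) * Real.log (I (2 / (a * x + (1 - a) * y)))
          ≤ (a * x + (1 - a) * y) * (a * x / (a * x + (1 - a) * y) * Real.log (I (2 / x)) +
              (1 - a) * y / (a * x + (1 - a) * y) * Real.log (I (2 / y))) := this
        _ = a * x * Real.log (I (2 / x)) + (1 - a) * y * Real.log (I (2 / y)) := by
            field_simp
    rw [hφeq _ hz, hφeq _ hx, hφeq _ hy]
    calc Real.exp ((a * x + (1 - a) * y) * Real.log (I (2 / (a * x + (1 - a) * y))))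
        ≤ Real.exp (a * (x * Real.log (I (2 / x))) + (1 - a) * (y * Real.log (I (2 / y)))) := by
          apply Real.exp_le_exp.mpr
          calc (a * x + (1 - a) * y) * Real.log (I (2 / (a * x + (1 - a) * y)))
              ≤ a * x * Real.log (I (2 / x)) + (1 - a) * y * Real.log (I (2 / y)) := hmul
            _ = a * (x * Real.log (I (2 / x))) + (1 - a) * (y * Real.log (I (2 / y))) := by ring
      _ ≤ a * Real.exp (x * Real.log (I (2 / x))) + (1 - a) * Real.exp (y * Real.log (I (2 / y))) := by
          have := convexOn_exp.2 (Set.mem_univ (x * Real.log (I (2 / x))))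
            (Set.mem_univ (y * Real.log (I (2 / y)))) ha.le hb.le hab
          simpa using this
  -- `φ 1` is `μ(g²)`
  have hφ1 : φ 1 = ∫ x, g x ^ (2 : ℝ) ∂μ := by
    show I (2 / 1) ^ (1 : ℝ) = _
    norm_num [hIdef]
  -- slope monotonicity
  have hmono := hφconv.slope_mono (Set.mem_Ioi.mpr (zero_lt_one (α := ℝ)))
  have hmem₁ : p₁ ∈ Set.Ioi (0 : ℝ) \ {1} := ⟨Set.mem_Ioi.mpr hp₁, hp₁1⟩
  have hmem₂ : p₂ ∈ Set.Ioi (0 : ℝ) \ {1} := ⟨Set.mem_Ioi.mpr hp₂, hp₂1⟩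
  have hslope := hmono hmem₁ hmem₂ hlt.le
  rw [slope_def_field, slope_def_field] at hslope
  have e₁ : ((∫ x, g x ^ (2 : ℝ) ∂μ) - (∫ x, g x ^ (2 / p₁) ∂μ) ^ p₁) / (p₁ - 1)
      = -((φ p₁ - φ 1) / (p₁ - 1)) := by
    rw [hφ1]
    show _ = -((I (2 / p₁) ^ p₁ - _) / _)
    rw [hIdef]
    ring
  have e₂ : ((∫ x, g x ^ (2 : ℝ) ∂μ) - (∫ x, g x ^ (2 / p₂) ∂μ) ^ p₂) / (p₂ - 1)
      = -((φ p₂ - φ 1) / (p₂ - 1)) := by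
    rw [hφ1]
    show _ = -((I (2 / p₂) ^ p₂ - _) / _)
    rw [hIdef]
    ring
  rw [e₁, e₂]
  linarith
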